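/- The cut monoid M_{K5} of the complete graph K5 on 5 vertices is not seminormal: there exists x ∈ gp(M_{K5}) with 2·x ∈ M_{K5} and 3·x ∈ M_{K5} but x ∉ M_{K5}. -/

import Mathlib

/-! Basic definitions for cut monoids of finite simple graphs. -/

open Classical in
/-- The cut vector of a vertex set `A`, as a function on `Sym2 V`:
value `1` on pairs with exactly one element in `A`, and `0` otherwise. -/
noncomputable def cutVec {V : Type} (A : Set V) : Sym2 V → ℤ :=
  Sym2.lift ⟨fun v w => if ((v ∈ A) ↔ (w ∈ A)) then 0 else 1,
    fun v w => if_congr iff_comm rfl rfl⟩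

variable {V : Type}

/-- The generators `(δ_A, 1)` of the cut monoid of `G`. -/
def cutGens (G : SimpleGraph V) : Set ((G.edgeSet → ℤ) × ℤ) :=
  {p | ∃ A : Set V, p = (fun e => cutVec A e.1, 1)}

/-- The cut monoid `M_G` of a graph `G`. -/
def cutMonoid (G : SimpleGraph V) : AddSubmonoid ((G.edgeSet → ℤ) × ℤ) :=
  AddSubmonoid.closure (cutGens G)

/-- The group `gp(M_G)` generated by the cut monoid. -/
def cutGroup (G : SimpleGraph V) : AddSubgroup ((G.edgeSet → ℤ) × ℤ) :=
  AddSubgroup.closure (cutGens G)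

/-- `M_G` is normal: every `x ∈ gp(M_G)` with `n • x ∈ M_G` for some `n ≥ 1` lies in `M_G`. -/
def CutNormal (G : SimpleGraph V) : Prop :=
  ∀ x ∈ cutGroup G, (∃ n : ℕ, 1 ≤ n ∧ n • x ∈ cutMonoid G) → x ∈ cutMonoid G

/-- `M_G` is seminormal: every `x ∈ gp(M_G)` with `2 • x ∈ M_G` and `3 • x ∈ M_G`
lies in `M_G`. -/
def CutSeminormal (G : SimpleGraph V) : Prop :=
  ∀ x ∈ cutGroup G, 2 • x ∈ cutMonoid G → 3 • x ∈ cutMonoid G → x ∈ cutMonoid G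

/-- Generators of the cone of `M_G`: nonnegative real multiples of the `(δ_A, 1)`. -/
noncomputable def cutConeGens (G : SimpleGraph V) : Set ((G.edgeSet → ℝ) × ℝ) :=
  {q | ∃ (c : ℝ) (A : Set V), 0 ≤ c ∧
    q = c • ((fun e => ((cutVec A e.1 : ℤ) : ℝ), (1 : ℝ)))}

/-- The cone `cone(M_G)`: all finite nonnegative real combinations of the `(δ_A, 1)`. -/
noncomputable def cutCone (G : SimpleGraph V) : Set ((G.edgeSet → ℝ) × ℝ) :=
  (AddSubmonoid.closure (cutConeGens G) : Set ((G.edgeSet → ℝ) × ℝ))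

/-- The canonical map from `ℤ^E × ℤ` to `ℝ^E × ℝ`. -/
noncomputable def toRealCut (G : SimpleGraph V) (p : (G.edgeSet → ℤ) × ℤ) :
    (G.edgeSet → ℝ) × ℝ :=
  (fun e => ((p.1 e : ℤ) : ℝ), ((p.2 : ℤ) : ℝ))

/-- `int(M_G)`: elements of `M_G` mapping into the topological interior of `cone(M_G)`. -/
noncomputable def cutInterior (G : SimpleGraph V) : Set ((G.edgeSet → ℤ) × ℤ) :=
  {p | p ∈ cutMonoid G ∧ toRealCut G p ∈ interior (cutCone G)}

/-- The set of last coordinates `α ∈ ℕ` realized by elements of `int(M_G)`;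
its least element is `m(G)`. -/
noncomputable def cutDegrees (G : SimpleGraph V) : Set ℕ :=
  {α | ∃ x : G.edgeSet → ℤ, ((x, (α : ℤ)) : (G.edgeSet → ℤ) × ℤ) ∈ cutInterior G}

/-- `H` is a minor of `G`: branch sets `B u` are nonempty, pairwise disjoint,
induce connected subgraphs, and edges of `H` are witnessed by edges of `G`. -/
def GraphMinor {W V : Type} (H : SimpleGraph W) (G : SimpleGraph V) : Prop :=
  ∃ B : W → Set V,
    (∀ u, (B u).Nonempty) ∧
    (∀ u v, u ≠ v → Disjoint (B u) (B v)) ∧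
    (∀ u, (G.induce (B u)).Connected) ∧
    (∀ u v, H.Adj u v → ∃ a ∈ B u, ∃ b ∈ B v, G.Adj a b)

/-- `G` is `K₅`-minor-free. -/
def K5Free (G : SimpleGraph V) : Prop :=
  ¬ GraphMinor (⊤ : SimpleGraph (Fin 5)) G

/-- `G` is bipartite: vertices split into two parts so every edge joins the parts. -/
def BipartiteG (G : SimpleGraph V) : Prop :=
  ∃ s : Set V, ∀ ⦃v w⦄, G.Adj v w → ((v ∈ s ∧ w ∉ s) ∨ (w ∈ s ∧ v ∉ s))

/-- `G` has an induced cycle of length `n` (n ≥ 3): an induced-subgraph copy of the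
cycle graph of length `n`. -/
def HasInducedCycleLen (G : SimpleGraph V) (n : ℕ) : Prop :=
  3 ≤ n ∧ Nonempty (SimpleGraph.cycleGraph n ↪g G)

/-- `G` contains a triangle. -/
def HasTriangle (G : SimpleGraph V) : Prop :=
  ∃ a b c, G.Adj a b ∧ G.Adj b c ∧ G.Adj a c

/-- `G` is chordal: every induced cycle is a triangle. -/
def ChordalG (G : SimpleGraph V) : Prop :=
  ∀ n, HasInducedCycleLen G n → n = 3

/-- `G` is bridgeless: every edge lies on some cycle. -/
def BridgelessG (G : SimpleGraph V) : Prop :=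
  ∀ e ∈ G.edgeSet, ∃ (v : V) (c : G.Walk v v), c.IsCycle ∧ e ∈ c.edges

/-- `G` is (isomorphic to) a cycle of length `n`. -/
def IsCycleOfLen (G : SimpleGraph V) (n : ℕ) : Prop :=
  3 ≤ n ∧ Nonempty (G ≃g SimpleGraph.cycleGraph n)

/-- `G` is a cycle. -/
def IsCycleGraph (G : SimpleGraph V) : Prop :=
  ∃ n, IsCycleOfLen G n

/-- `G` is a `0`-sum of `G1` and `G2`: copies of `G1`, `G2` cover `G`,
overlap in exactly one vertex, and every edge comes from `G1` or `G2`. -/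
def IsZeroSumDecomp {V1 V2 : Type} (G : SimpleGraph V) (G1 : SimpleGraph V1)
    (G2 : SimpleGraph V2) : Prop :=
  ∃ (f1 : V1 ↪ V) (f2 : V2 ↪ V),
    Set.range f1 ∪ Set.range f2 = Set.univ ∧
    (∃ v, Set.range f1 ∩ Set.range f2 = {v}) ∧
    (∀ a b, G.Adj a b ↔
      ((∃ x y, f1 x = a ∧ f1 y = b ∧ G1.Adj x y) ∨
       (∃ x y, f2 x = a ∧ f2 y = b ∧ G2.Adj x y)))

/-- `G` is a `1`-sum of `G1` and `G2` along a common edge. -/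
def IsOneSumDecomp {V1 V2 : Type} (G : SimpleGraph V) (G1 : SimpleGraph V1)
    (G2 : SimpleGraph V2) : Prop :=
  ∃ (f1 : V1 ↪ V) (f2 : V2 ↪ V) (v w : V),
    v ≠ w ∧
    Set.range f1 ∪ Set.range f2 = Set.univ ∧
    Set.range f1 ∩ Set.range f2 = {v, w} ∧
    (∃ x y, f1 x = v ∧ f1 y = w ∧ G1.Adj x y) ∧
    (∃ x y, f2 x = v ∧ f2 y = w ∧ G2.Adj x y) ∧
    (∀ a b, G.Adj a b ↔
      ((∃ x y, f1 x = a ∧ f1 y = b ∧ G1.Adj x y) ∨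
       (∃ x y, f2 x = a ∧ f2 y = b ∧ G2.Adj x y)))

/-- Ring graphs: obtained, up to adding isolated vertices, from finitely many
(finite) trees and cycles by iterated `0`-sums and `1`-sums. -/
inductive IsRingGraph : {V : Type} → SimpleGraph V → Prop
  | tree {V : Type} (G : SimpleGraph V) :
      Finite V → G.Connected → G.IsAcyclic → IsRingGraph G
  | cycle {V : Type} (G : SimpleGraph V) : IsCycleGraph G → IsRingGraph G
  | zeroSum {V1 V2 V : Type} {G1 : SimpleGraph V1} {G2 : SimpleGraph V2}
      {G : SimpleGraph V} :
      IsRingGraph G1 → IsRingGraph G2 → IsZeroSumDecomp G G1 G2 → IsRingGraph G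
  | oneSum {V1 V2 V : Type} {G1 : SimpleGraph V1} {G2 : SimpleGraph V2}
      {G : SimpleGraph V} :
      IsRingGraph G1 → IsRingGraph G2 → IsOneSumDecomp G G1 G2 → IsRingGraph G
  | addIsolated {V W : Type} {G : SimpleGraph V} {H : SimpleGraph W} (f : V ↪ W) :
      IsRingGraph G → (∀ a b, H.Adj a b ↔ ∃ x y, f x = a ∧ f y = b ∧ G.Adj x y) →
      IsRingGraph H

/-- An edge of an induced subgraph is an edge of the ambient graph. -/
lemma induce_edge_mem (G : SimpleGraph V) (s : Set V) (e : Sym2 s)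
    (he : e ∈ (G.induce s).edgeSet) : e.map Subtype.val ∈ G.edgeSet := by
  induction e using Sym2.ind with
  | _ a b =>
    rw [Sym2.map_pair_eq, SimpleGraph.mem_edgeSet]
    exact he

/-- Restriction of a vector indexed by the edges of `G` to the edges of the
subgraph of `G` induced on `s`. -/
noncomputable def restrictCut (G : SimpleGraph V) (s : Set V) (p : G.edgeSet → ℤ) :
    (G.induce s).edgeSet → ℤ :=
  fun e => p ⟨e.1.map Subtype.val, induce_edge_mem G s e.1 e.2⟩


/-! ### Auxiliary material for Statement 3 -/

section K5Aux

/-- `if x = y then 0 else 1` as an integer-valued function of two booleans. -/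
def f01 (x y : Bool) : ℤ := if x = y then 0 else 1

open Classical in
lemma cutVec_f01 {V : Type} (A : Set V) (b : V → Bool)
    (hb : ∀ v, b v = true ↔ v ∈ A) (i j : V) :
    cutVec A s(i,j) = f01 (b i) (b j) := by
  unfold cutVec; rw [Sym2.lift_mk]
  show (if (i ∈ A ↔ j ∈ A) then (0:ℤ) else 1) = _
  refine if_congr ?_ rfl rfl
  rw [← hb, ← hb]
  exact Bool.coe_iff_coe

lemma f01_xor : ∀ x y z : Bool, f01 x y = f01 (x != z) (y != z) := by decide
lemma f01_zero : ∀ x z : Bool, f01 x z = f01 (x != z) false := by decide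

abbrev ex2 (a b c d : Bool) : Prop :=
  f01 a false + (f01 b false + (f01 c false + f01 d false)) = 2
abbrev ex2' (a b c d a' b' c' d' : Bool) : Prop :=
  f01 a a' + (f01 b b' + (f01 c c' + f01 d d')) = 2

set_option maxHeartbeats 2000000 in
lemma no4 : ∀ a1 b1 c1 d1 a2 b2 c2 d2 a3 b3 c3 d3 a4 b4 c4 d4 : Bool,
    ¬ (ex2 a1 b1 c1 d1 ∧ ex2 a2 b2 c2 d2 ∧ ex2 a3 b3 c3 d3 ∧ ex2 a4 b4 c4 d4 ∧
       ex2' a1 b1 c1 d1 a2 b2 c2 d2 ∧ ex2' a1 b1 c1 d1 a3 b3 c3 d3 ∧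
       ex2' a1 b1 c1 d1 a4 b4 c4 d4 ∧ ex2' a2 b2 c2 d2 a3 b3 c3 d3 ∧
       ex2' a2 b2 c2 d2 a4 b4 c4 d4 ∧ ex2' a3 b3 c3 d3 a4 b4 c4 d4) := by
  decide

/-- No four cuts of `K₅` sum to the constant vector `2`. -/
lemma no_four_cuts (A1 A2 A3 A4 : Set (Fin 5))
    (hedge : ∀ i j : Fin 5, i ≠ j →
      cutVec A1 s(i,j) + (cutVec A2 s(i,j) + (cutVec A3 s(i,j) + cutVec A4 s(i,j))) = 2) :
    False := by
  classical
  have hb : ∀ A : Set (Fin 5), ∃ b : Fin 5 → Bool, ∀ v, b v = true ↔ v ∈ A := by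
    intro A; exact ⟨fun v => decide (v ∈ A), fun v => by simp⟩
  obtain ⟨b1, hb1⟩ := hb A1
  obtain ⟨b2, hb2⟩ := hb A2
  obtain ⟨b3, hb3⟩ := hb A3
  obtain ⟨b4, hb4⟩ := hb A4
  have hedge' : ∀ i j : Fin 5, i ≠ j →
      f01 (b1 i) (b1 j) + (f01 (b2 i) (b2 j) + (f01 (b3 i) (b3 j) + f01 (b4 i) (b4 j))) = 2 := by
    intro i j hij
    have h := hedge i j hij
    rwa [cutVec_f01 A1 b1 hb1, cutVec_f01 A2 b2 hb2, cutVec_f01 A3 b3 hb3,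
      cutVec_f01 A4 b4 hb4] at h
  refine no4 (b1 1 != b1 0) (b2 1 != b2 0) (b3 1 != b3 0) (b4 1 != b4 0)
    (b1 2 != b1 0) (b2 2 != b2 0) (b3 2 != b3 0) (b4 2 != b4 0)
    (b1 3 != b1 0) (b2 3 != b2 0) (b3 3 != b3 0) (b4 3 != b4 0)
    (b1 4 != b1 0) (b2 4 != b2 0) (b3 4 != b3 0) (b4 4 != b4 0)
    ⟨?_, ?_, ?_, ?_, ?_, ?_, ?_, ?_, ?_, ?_⟩
  · have h := hedge' 1 0 (by decide)
    rw [f01_zero (b1 1) (b1 0), f01_zero (b2 1) (b2 0), f01_zero (b3 1) (b3 0),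
      f01_zero (b4 1) (b4 0)] at h
    exact h
  · have h := hedge' 2 0 (by decide)
    rw [f01_zero (b1 2) (b1 0), f01_zero (b2 2) (b2 0), f01_zero (b3 2) (b3 0),
      f01_zero (b4 2) (b4 0)] at h
    exact h
  · have h := hedge' 3 0 (by decide)
    rw [f01_zero (b1 3) (b1 0), f01_zero (b2 3) (b2 0), f01_zero (b3 3) (b3 0),
      f01_zero (b4 3) (b4 0)] at h
    exact h
  · have h := hedge' 4 0 (by decide)
    rw [f01_zero (b1 4) (b1 0), f01_zero (b2 4) (b2 0), f01_zero (b3 4) (b3 0),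
      f01_zero (b4 4) (b4 0)] at h
    exact h
  · have h := hedge' 1 2 (by decide)
    rw [f01_xor (b1 1) (b1 2) (b1 0), f01_xor (b2 1) (b2 2) (b2 0),
      f01_xor (b3 1) (b3 2) (b3 0), f01_xor (b4 1) (b4 2) (b4 0)] at h
    exact h
  · have h := hedge' 1 3 (by decide)
    rw [f01_xor (b1 1) (b1 3) (b1 0), f01_xor (b2 1) (b2 3) (b2 0),
      f01_xor (b3 1) (b3 3) (b3 0), f01_xor (b4 1) (b4 3) (b4 0)] at h
    exact h
  · have h := hedge' 1 4 (by decide)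
    rw [f01_xor (b1 1) (b1 4) (b1 0), f01_xor (b2 1) (b2 4) (b2 0),
      f01_xor (b3 1) (b3 4) (b3 0), f01_xor (b4 1) (b4 4) (b4 0)] at h
    exact h
  · have h := hedge' 2 3 (by decide)
    rw [f01_xor (b1 2) (b1 3) (b1 0), f01_xor (b2 2) (b2 3) (b2 0),
      f01_xor (b3 2) (b3 3) (b3 0), f01_xor (b4 2) (b4 3) (b4 0)] at h
    exact h
  · have h := hedge' 2 4 (by decide)
    rw [f01_xor (b1 2) (b1 4) (b1 0), f01_xor (b2 2) (b2 4) (b2 0),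
      f01_xor (b3 2) (b3 4) (b3 0), f01_xor (b4 2) (b4 4) (b4 0)] at h
    exact h
  · have h := hedge' 3 4 (by decide)
    rw [f01_xor (b1 3) (b1 4) (b1 0), f01_xor (b2 3) (b2 4) (b2 0),
      f01_xor (b3 3) (b3 4) (b3 0), f01_xor (b4 3) (b4 4) (b4 0)] at h
    exact h

/-- The set determined by a boolean predicate on `Fin 5`. -/
def bset (b : Fin 5 → Bool) : Set (Fin 5) := {v | b v = true}

lemma cutVec_bset (b : Fin 5 → Bool) (i j : Fin 5) :
    cutVec (bset b) s(i,j) = f01 (b i) (b j) :=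
  cutVec_f01 _ b (fun _ => Iff.rfl) i j

/-- The generator of the cut monoid of `K₅` associated to a boolean predicate. -/
noncomputable def gn (b : Fin 5 → Bool) :
    ((⊤ : SimpleGraph (Fin 5)).edgeSet → ℤ) × ℤ :=
  (fun e => cutVec (bset b) e.1, 1)

lemma gn_mem (b : Fin 5 → Bool) : gn b ∈ cutMonoid (⊤ : SimpleGraph (Fin 5)) :=
  AddSubmonoid.subset_closure ⟨bset b, rfl⟩

def cz : Fin 5 → Bool := fun _ => false
def sg : Fin 5 → Bool := fun v => v == 0
def pr (i j : Fin 5) : Fin 5 → Bool := fun v => v == i || v == j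

lemma sum8 : ∀ i j : Fin 5, i ≠ j →
    f01 (cz i) (cz j) + (f01 (sg i) (sg j) + (f01 (pr 1 2 i) (pr 1 2 j) +
      (f01 (pr 1 3 i) (pr 1 3 j) + (f01 (pr 1 4 i) (pr 1 4 j) + (f01 (pr 2 3 i) (pr 2 3 j) +
      (f01 (pr 2 4 i) (pr 2 4 j) + f01 (pr 3 4 i) (pr 3 4 j))))))) = 4 := by decide

lemma sum12 : ∀ i j : Fin 5, i ≠ j →
    f01 (cz i) (cz j) + (f01 (cz i) (cz j) + (f01 (pr 0 1 i) (pr 0 1 j) +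
      (f01 (pr 0 2 i) (pr 0 2 j) + (f01 (pr 0 3 i) (pr 0 3 j) + (f01 (pr 0 4 i) (pr 0 4 j) +
      (f01 (pr 1 2 i) (pr 1 2 j) + (f01 (pr 1 3 i) (pr 1 3 j) + (f01 (pr 1 4 i) (pr 1 4 j) +
      (f01 (pr 2 3 i) (pr 2 3 j) + (f01 (pr 2 4 i) (pr 2 4 j) +
      f01 (pr 3 4 i) (pr 3 4 j))))))))))) = 6 := by decide

end K5Aux

/-- The cut monoid of `K₅` is not seminormal: there is an
`x ∈ gp(M_{K₅})` with `2 • x ∈ M_{K₅}` and `3 • x ∈ M_{K₅}` but `x ∉ M_{K₅}`. -/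
theorem K5_cut_not_seminormal :
    ¬ CutSeminormal (⊤ : SimpleGraph (Fin 5)) ∧
    ∃ x ∈ cutGroup (⊤ : SimpleGraph (Fin 5)),
      2 • x ∈ cutMonoid (⊤ : SimpleGraph (Fin 5)) ∧
      3 • x ∈ cutMonoid (⊤ : SimpleGraph (Fin 5)) ∧
      x ∉ cutMonoid (⊤ : SimpleGraph (Fin 5)) := by
  set x : ((⊤ : SimpleGraph (Fin 5)).edgeSet → ℤ) × ℤ := (fun _ => 2, 4) with hxdef
  -- `2 • x` is a sum of 8 cuts
  have h2mem : 2 • x ∈ cutMonoid (⊤ : SimpleGraph (Fin 5)) := by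
    have heq : 2 • x = gn cz + (gn sg + (gn (pr 1 2) + (gn (pr 1 3) + (gn (pr 1 4) +
        (gn (pr 2 3) + (gn (pr 2 4) + gn (pr 3 4))))))) := by
      refine Prod.ext ?_ ?_
      · funext e
        obtain ⟨e, he⟩ := e
        induction e using Sym2.ind with
        | _ i j =>
          rw [SimpleGraph.mem_edgeSet, SimpleGraph.top_adj] at he
          simp only [hxdef, gn, Prod.smul_fst, Prod.fst_add, Pi.smul_apply, Pi.add_apply,
            smul_eq_mul]
          simp only [cutVec_bset]
          rw [sum8 i j he]; norm_num
      · simp [hxdef, gn]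
    rw [heq]
    exact add_mem (gn_mem _) (add_mem (gn_mem _) (add_mem (gn_mem _) (add_mem (gn_mem _)
      (add_mem (gn_mem _) (add_mem (gn_mem _) (add_mem (gn_mem _) (gn_mem _)))))))
  -- `3 • x` is a sum of 12 cuts
  have h3mem : 3 • x ∈ cutMonoid (⊤ : SimpleGraph (Fin 5)) := by
    have heq : 3 • x = gn cz + (gn cz + (gn (pr 0 1) + (gn (pr 0 2) + (gn (pr 0 3) +
        (gn (pr 0 4) + (gn (pr 1 2) + (gn (pr 1 3) + (gn (pr 1 4) + (gn (pr 2 3) +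
        (gn (pr 2 4) + gn (pr 3 4))))))))))) := by
      refine Prod.ext ?_ ?_
      · funext e
        obtain ⟨e, he⟩ := e
        induction e using Sym2.ind with
        | _ i j =>
          rw [SimpleGraph.mem_edgeSet, SimpleGraph.top_adj] at he
          simp only [hxdef, gn, Prod.smul_fst, Prod.fst_add, Pi.smul_apply, Pi.add_apply,
            smul_eq_mul]
          simp only [cutVec_bset]
          rw [sum12 i j he]; norm_num
      · simp [hxdef, gn]
    rw [heq]
    exact add_mem (gn_mem _) (add_mem (gn_mem _) (add_mem (gn_mem _) (add_mem (gn_mem _)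
      (add_mem (gn_mem _) (add_mem (gn_mem _) (add_mem (gn_mem _) (add_mem (gn_mem _)
      (add_mem (gn_mem _) (add_mem (gn_mem _) (add_mem (gn_mem _) (gn_mem _)))))))))))
  -- `x` lies in the group generated by the cuts
  have hle : ∀ y, y ∈ cutMonoid (⊤ : SimpleGraph (Fin 5)) →
      y ∈ cutGroup (⊤ : SimpleGraph (Fin 5)) := by
    intro y hy
    have h : cutMonoid (⊤ : SimpleGraph (Fin 5)) ≤
        (cutGroup (⊤ : SimpleGraph (Fin 5))).toAddSubmonoid :=
      AddSubmonoid.closure_le.mpr (fun z hz => AddSubgroup.subset_closure hz)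
    exact h hy
  have hgrp : x ∈ cutGroup (⊤ : SimpleGraph (Fin 5)) := by
    have hxeq : x = 3 • x - 2 • x := by
      have : (3:ℕ) • x = 2 • x + x := succ_nsmul x 2
      rw [this]; abel
    rw [hxeq]
    exact sub_mem (hle _ h3mem) (hle _ h2mem)
  -- `x` is not in the cut monoid
  have hnot : x ∉ cutMonoid (⊤ : SimpleGraph (Fin 5)) := by
    intro hmem
    obtain ⟨l, hl, hsum⟩ := AddSubmonoid.exists_list_of_mem_closure hmem
    have hlen : ∀ L : List (((⊤ : SimpleGraph (Fin 5)).edgeSet → ℤ) × ℤ),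
        (∀ p ∈ L, p ∈ cutGens (⊤ : SimpleGraph (Fin 5))) → L.sum.2 = L.length := by
      intro L
      induction L with
      | nil => intro _; rfl
      | cons p t ih =>
        intro h
        obtain ⟨A, hA⟩ := h p List.mem_cons_self
        have ht := ih (fun q hq => h q (List.mem_cons_of_mem p hq))
        simp only [List.sum_cons, Prod.snd_add, ht, hA, List.length_cons]
        push_cast; ring
    have h4 : l.length = 4 := by
      have h := hlen l hl
      rw [hsum] at h
      have : ((4:ℕ) : ℤ) = (l.length : ℤ) := h
      exact_mod_cast this.symm
    rcases l with _ | ⟨p1, l⟩; · simp at h4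
    rcases l with _ | ⟨p2, l⟩; · simp at h4
    rcases l with _ | ⟨p3, l⟩; · simp at h4
    rcases l with _ | ⟨p4, l⟩; · simp at h4
    rcases l with _ | ⟨p5, l⟩
    swap
    · simp only [List.length_cons] at h4; omega
    obtain ⟨A1, hA1⟩ := hl p1 (by simp)
    obtain ⟨A2, hA2⟩ := hl p2 (by simp)
    obtain ⟨A3, hA3⟩ := hl p3 (by simp)
    obtain ⟨A4, hA4⟩ := hl p4 (by simp)
    subst hA1 hA2 hA3 hA4
    simp only [List.sum_cons, List.sum_nil, add_zero] at hsum
    have hfst := congrArg Prod.fst hsum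
    simp only [Prod.fst_add] at hfst
    refine no_four_cuts A1 A2 A3 A4 (fun i j hij => ?_)
    have he : s(i,j) ∈ (⊤ : SimpleGraph (Fin 5)).edgeSet := by
      rw [SimpleGraph.mem_edgeSet, SimpleGraph.top_adj]; exact hij
    have h := congrFun hfst ⟨s(i,j), he⟩
    simpa [hxdef, Pi.add_apply] using h
  exact ⟨fun h => hnot (h x hgrp h2mem h3mem), x, hgrp, h2mem, h3mem, hnot⟩
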